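/- Similarity form of the flow velocity: fix angles θ, φ and an orthonormal basis (e_r, e_θ, e_φ) of ℝ³, and write ζ_r = ζ·e_r, ζ_θ = ζ·e_θ, ζ_φ = ζ·e_φ. Let U, V, S ∈ ℝ and let A, B, C be functions of two variables such that Φ(ζ) = (U cos θ + V sin θ cos φ) A(ζ_r, |ζ|) + [ζ_θ (U sin θ − V cos θ cos φ) + V ζ_φ sin φ] B(ζ_r, |ζ|) + S ζ_φ sin θ · C(ζ_r, |ζ|) is integrable against (1+|ζ|)E(ζ). Then ⟨ζ_r Φ⟩ = (U cos θ + V sin θ cos φ) ⟨ζ_r A(ζ_r,|ζ|)⟩, ⟨ζ_θ Φ⟩ = (U sin θ − V cos θ cos φ) · (1/2) ⟨(|ζ|² − ζ_r²) B(ζ_r,|ζ|)⟩, and ⟨ζ_φ Φ⟩ = V sin φ · (1/2) ⟨(|ζ|² − ζ_r²) B(ζ_r,|ζ|)⟩ + S sin θ · (1/2) ⟨(|ζ|² − ζ_r²) C(ζ_r,|ζ|)⟩. -/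

import Mathlib

open MeasureTheory Real Filter

noncomputable section

/-- The velocity space `ℝ³`. -/
abbrev V3 : Type := EuclideanSpace ℝ (Fin 3)

/-- Surface measure (2-dimensional Hausdorff measure), used for sphere integrals. -/
abbrev surf : Measure V3 := μH[2]

/-- The Gaussian weight `E(ζ) = π^{-3/2} exp(-|ζ|²)`. -/
def Egauss (ζ : V3) : ℝ := Real.pi ^ (-(3 : ℝ) / 2) * Real.exp (-‖ζ‖ ^ 2)

/-- The Gaussian-weighted bracket `⟨g⟩ = ∫ g(ζ) E(ζ) dζ`. -/
def gint (g : V3 → ℝ) : ℝ := ∫ ζ : V3, g ζ * Egauss ζ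

/-- The integrand of the Boltzmann collision operator (for fixed `ζ`, integration
variables `ζs ∈ ℝ³` and `e ∈ S²`), with kernel `B`. -/
def collKer (B : ℝ → ℝ → ℝ) (F G : V3 → ℝ) (ζ ζs e : V3) : ℝ :=
  Egauss ζs *
    (F (ζs - (inner ℝ (ζs - ζ) e : ℝ) • e) * G (ζ + (inner ℝ (ζs - ζ) e : ℝ) • e)
      + F (ζ + (inner ℝ (ζs - ζ) e : ℝ) • e) * G (ζs - (inner ℝ (ζs - ζ) e : ℝ) • e)
      - F ζs * G ζ - F ζ * G ζs)
    * B (|(inner ℝ e (ζs - ζ) : ℝ)| / ‖ζs - ζ‖) ‖ζs - ζ‖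

/-- The Boltzmann collision operator `J(F,G)` with kernel `B`. -/
def collJ (B : ℝ → ℝ → ℝ) (F G : V3 → ℝ) (ζ : V3) : ℝ :=
  (1 / 2) * ∫ ζs : V3, ∫ e in Metric.sphere (0 : V3) 1, collKer B F G ζ ζs e ∂surf

/-- The linearized collision operator `L(φ) = 2 J(1, φ)`. -/
def collL (B : ℝ → ℝ → ℝ) (φ : V3 → ℝ) (ζ : V3) : ℝ := 2 * collJ B (fun _ => 1) φ ζ

open scoped RealInnerProductSpace

lemma egauss_pos (ζ : V3) : 0 < Egauss ζ :=
  mul_pos (Real.rpow_pos_of_pos Real.pi_pos _) (Real.exp_pos _)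

lemma egauss_cont : Continuous Egauss :=
  continuous_const.mul (((continuous_norm.pow 2).neg).rexp)

lemma integral_comp_iso (e : V3 ≃ₗᵢ[ℝ] V3) (g : V3 → ℝ) :
    ∫ ζ : V3, g (e ζ) = ∫ ζ : V3, g ζ :=
  e.measurePreserving.integral_comp e.toHomeomorph.measurableEmbedding g

lemma integral_eq_zero_of_neg (e : V3 ≃ₗᵢ[ℝ] V3) (g : V3 → ℝ)
    (h : ∀ ζ, g (e ζ) = -g ζ) : ∫ ζ : V3, g ζ = 0 := by
  have h1 := integral_comp_iso e g
  simp only [h, integral_neg] at h1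
  linarith

lemma aesm_of_weight {f : V3 → ℝ}
    (hf : Integrable (fun ζ : V3 => (1 + ‖ζ‖) ^ 2 * f ζ * Egauss ζ)) :
    AEStronglyMeasurable f (volume : Measure V3) := by
  have hden : Continuous fun ζ : V3 => (1 + ‖ζ‖) ^ 2 * Egauss ζ :=
    ((continuous_const.add continuous_norm).pow 2).mul egauss_cont
  have h : AEMeasurable
      (fun ζ : V3 => ((1 + ‖ζ‖) ^ 2 * f ζ * Egauss ζ) / ((1 + ‖ζ‖) ^ 2 * Egauss ζ)) volume :=
    hf.aemeasurable.div hden.measurable.aemeasurable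
  refine h.aestronglyMeasurable.congr (Eventually.of_forall fun ζ => ?_)
  have h1 : (1 + ‖ζ‖) ^ 2 * Egauss ζ ≠ 0 := by
    have := egauss_pos ζ; positivity
  show ((1 + ‖ζ‖) ^ 2 * f ζ * Egauss ζ) / ((1 + ‖ζ‖) ^ 2 * Egauss ζ) = f ζ
  rw [show (1 + ‖ζ‖) ^ 2 * f ζ * Egauss ζ = f ζ * ((1 + ‖ζ‖) ^ 2 * Egauss ζ) by ring]
  exact mul_div_cancel_right₀ _ h1

lemma integrable_weighted {f : V3 → ℝ}
    (hf : Integrable (fun ζ : V3 => (1 + ‖ζ‖) ^ 2 * f ζ * Egauss ζ))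
    {p : V3 → ℝ} (hp : Continuous p) (hpb : ∀ ζ, |p ζ| ≤ (1 + ‖ζ‖) ^ 2) :
    Integrable (fun ζ : V3 => p ζ * f ζ * Egauss ζ) := by
  refine hf.norm.mono'
    ((hp.aestronglyMeasurable.mul (aesm_of_weight hf)).mul egauss_cont.aestronglyMeasurable)
    (Eventually.of_forall fun ζ => ?_)
  have hE := (egauss_pos ζ).le
  have h1 : (0 : ℝ) ≤ (1 + ‖ζ‖) ^ 2 := by positivity
  simp only [norm_mul, Real.norm_eq_abs]
  rw [abs_of_nonneg hE, abs_of_nonneg h1]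
  gcongr
  exact hpb ζ

set_option maxHeartbeats 1000000 in
/-- Similarity form of the flow velocity: with an orthonormal basis
`(e_r, e_θ, e_φ)` of `ℝ³`, components `ζ_r = ζ·e_r` etc., and
`Φ(ζ) = (U cos θ + V sin θ cos ϕ) A(ζ_r,|ζ|)
  + [ζ_θ (U sin θ - V cos θ cos ϕ) + V ζ_φ sin ϕ] B(ζ_r,|ζ|) + S ζ_φ sin θ C(ζ_r,|ζ|)`,
the three velocity brackets `⟨ζ_r Φ⟩, ⟨ζ_θ Φ⟩, ⟨ζ_φ Φ⟩` take the stated similarity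
form. -/
theorem similarity_flow_velocity
    (er eθ eφ : V3) (hON : Orthonormal ℝ ![er, eθ, eφ])
    (θ ϕ U V S : ℝ) (A Bf C : ℝ → ℝ → ℝ) (Φ : V3 → ℝ)
    (hΦ : ∀ ζ : V3, Φ ζ =
      (U * Real.cos θ + V * Real.sin θ * Real.cos ϕ) * A (inner ℝ ζ er : ℝ) ‖ζ‖
      + ((inner ℝ ζ eθ : ℝ) * (U * Real.sin θ - V * Real.cos θ * Real.cos ϕ)
          + V * (inner ℝ ζ eφ : ℝ) * Real.sin ϕ) * Bf (inner ℝ ζ er : ℝ) ‖ζ‖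
      + S * (inner ℝ ζ eφ : ℝ) * Real.sin θ * C (inner ℝ ζ er : ℝ) ‖ζ‖)
    (hΦint : Integrable (fun ζ : V3 => (1 + ‖ζ‖) * Φ ζ * Egauss ζ))
    (hA : Integrable (fun ζ : V3 => (1 + ‖ζ‖) ^ 2 * A (inner ℝ ζ er : ℝ) ‖ζ‖ * Egauss ζ))
    (hB : Integrable (fun ζ : V3 => (1 + ‖ζ‖) ^ 2 * Bf (inner ℝ ζ er : ℝ) ‖ζ‖ * Egauss ζ))
    (hC : Integrable (fun ζ : V3 => (1 + ‖ζ‖) ^ 2 * C (inner ℝ ζ er : ℝ) ‖ζ‖ * Egauss ζ)) :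
    gint (fun ζ => (inner ℝ ζ er : ℝ) * Φ ζ)
      = (U * Real.cos θ + V * Real.sin θ * Real.cos ϕ)
          * gint (fun ζ => (inner ℝ ζ er : ℝ) * A (inner ℝ ζ er : ℝ) ‖ζ‖) ∧
    gint (fun ζ => (inner ℝ ζ eθ : ℝ) * Φ ζ)
      = (U * Real.sin θ - V * Real.cos θ * Real.cos ϕ)
          * ((1 / 2) * gint (fun ζ => (‖ζ‖ ^ 2 - (inner ℝ ζ er : ℝ) ^ 2) * Bf (inner ℝ ζ er : ℝ) ‖ζ‖)) ∧
    gint (fun ζ => (inner ℝ ζ eφ : ℝ) * Φ ζ)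
      = V * Real.sin ϕ
          * ((1 / 2) * gint (fun ζ => (‖ζ‖ ^ 2 - (inner ℝ ζ er : ℝ) ^ 2) * Bf (inner ℝ ζ er : ℝ) ‖ζ‖))
        + S * Real.sin θ
          * ((1 / 2) * gint (fun ζ => (‖ζ‖ ^ 2 - (inner ℝ ζ er : ℝ) ^ 2) * C (inner ℝ ζ er : ℝ) ‖ζ‖)) := by
  -- orthonormality facts
  have h2 := orthonormal_iff_ite.mp hON
  have hθr : ⟪eθ, er⟫ = (0 : ℝ) := by simpa using h2 1 0
  have hφr : ⟪eφ, er⟫ = (0 : ℝ) := by simpa using h2 2 0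
  have hθφ : ⟪eθ, eφ⟫ = (0 : ℝ) := by simpa using h2 1 2
  have hφθ : ⟪eφ, eθ⟫ = (0 : ℝ) := by simpa using h2 2 1
  have hner : ‖er‖ = 1 := by simpa using hON.1 0
  have hneθ : ‖eθ‖ = 1 := by simpa using hON.1 1
  have hneφ : ‖eφ‖ = 1 := by simpa using hON.1 2
  -- orthonormal basis
  have hcard : Fintype.card (Fin 3) = Module.finrank ℝ V3 := by
    simp [finrank_euclideanSpace_fin]
  have hspan : ⊤ ≤ Submodule.span ℝ (Set.range ![er, eθ, eφ]) :=
    (hON.linearIndependent.span_eq_top_of_card_eq_finrank hcard).ge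
  let b : OrthonormalBasis (Fin 3) ℝ V3 := OrthonormalBasis.mk hON hspan
  have hb0 : b 0 = er := by simp [b, OrthonormalBasis.coe_mk]
  have hb1 : b 1 = eθ := by simp [b, OrthonormalBasis.coe_mk]
  have hb2 : b 2 = eφ := by simp [b, OrthonormalBasis.coe_mk]
  -- Parseval
  have parseval : ∀ ζ : V3, ⟪ζ, er⟫ ^ 2 + ⟪ζ, eθ⟫ ^ 2 + ⟪ζ, eφ⟫ ^ 2 = ‖ζ‖ ^ 2 := by
    intro ζ
    have h := b.sum_inner_mul_inner ζ ζ
    rw [Fin.sum_univ_three, hb0, hb1, hb2, real_inner_comm ζ er, real_inner_comm ζ eθ,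
      real_inner_comm ζ eφ, real_inner_self_eq_norm_sq] at h
    simp only [pow_two]
    linarith
  -- reflection negating eθ
  let Rθ : V3 ≃ₗᵢ[ℝ] V3 := Submodule.reflection (ℝ ∙ eθ)ᗮ
  have hRθer : Rθ er = er :=
    Submodule.reflection_mem_subspace_eq_self
      (Submodule.mem_orthogonal_singleton_iff_inner_right.mpr hθr)
  have hRθeθ : Rθ eθ = -eθ := Submodule.reflection_orthogonalComplement_singleton_eq_neg eθ
  have hRθeφ : Rθ eφ = eφ :=
    Submodule.reflection_mem_subspace_eq_self
      (Submodule.mem_orthogonal_singleton_iff_inner_right.mpr hθφ)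
  have hRθ_r : ∀ ζ : V3, ⟪Rθ ζ, er⟫ = ⟪ζ, er⟫ := fun ζ => by
    conv_lhs => rw [← hRθer]
    exact Rθ.inner_map_map ζ er
  have hRθ_θ : ∀ ζ : V3, ⟪Rθ ζ, eθ⟫ = -⟪ζ, eθ⟫ := fun ζ => by
    conv_lhs => rw [show eθ = -(Rθ eθ) from by rw [hRθeθ, neg_neg]]
    rw [inner_neg_right, Rθ.inner_map_map]
  have hRθ_φ : ∀ ζ : V3, ⟪Rθ ζ, eφ⟫ = ⟪ζ, eφ⟫ := fun ζ => by
    conv_lhs => rw [← hRθeφ]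
    exact Rθ.inner_map_map ζ eφ
  -- reflection negating eφ
  let Rφ : V3 ≃ₗᵢ[ℝ] V3 := Submodule.reflection (ℝ ∙ eφ)ᗮ
  have hRφer : Rφ er = er :=
    Submodule.reflection_mem_subspace_eq_self
      (Submodule.mem_orthogonal_singleton_iff_inner_right.mpr hφr)
  have hRφeφ : Rφ eφ = -eφ := Submodule.reflection_orthogonalComplement_singleton_eq_neg eφ
  have hRφeθ : Rφ eθ = eθ :=
    Submodule.reflection_mem_subspace_eq_self
      (Submodule.mem_orthogonal_singleton_iff_inner_right.mpr hφθ)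
  have hRφ_r : ∀ ζ : V3, ⟪Rφ ζ, er⟫ = ⟪ζ, er⟫ := fun ζ => by
    conv_lhs => rw [← hRφer]
    exact Rφ.inner_map_map ζ er
  have hRφ_φ : ∀ ζ : V3, ⟪Rφ ζ, eφ⟫ = -⟪ζ, eφ⟫ := fun ζ => by
    conv_lhs => rw [show eφ = -(Rφ eφ) from by rw [hRφeφ, neg_neg]]
    rw [inner_neg_right, Rφ.inner_map_map]
  have hRφ_θ : ∀ ζ : V3, ⟪Rφ ζ, eθ⟫ = ⟪ζ, eθ⟫ := fun ζ => by
    conv_lhs => rw [← hRφeθ]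
    exact Rφ.inner_map_map ζ eθ
  -- swap isometry exchanging eθ and eφ
  let σ : Fin 3 ≃ Fin 3 := Equiv.swap 1 2
  let T : V3 ≃ₗᵢ[ℝ] V3 := b.repr.trans (b.reindex σ).repr.symm
  have hTb : ∀ i, T (b i) = b (σ.symm i) := fun i => by
    simp only [T, LinearIsometryEquiv.trans_apply, OrthonormalBasis.repr_self]
    rw [OrthonormalBasis.repr_symm_single, OrthonormalBasis.reindex_apply]
  have hTer : T er = er := by
    have := hTb 0
    rw [hb0] at this
    rw [this, show σ.symm 0 = 0 from by decide, hb0]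
  have hTeθ : T eθ = eφ := by
    have := hTb 1
    rw [hb1] at this
    rw [this, show σ.symm 1 = 2 from by decide, hb2]
  have hTeφ : T eφ = eθ := by
    have := hTb 2
    rw [hb2] at this
    rw [this, show σ.symm 2 = 1 from by decide, hb1]
  have hT_r : ∀ ζ : V3, ⟪T ζ, er⟫ = ⟪ζ, er⟫ := fun ζ => by
    conv_lhs => rw [← hTer]
    exact T.inner_map_map ζ er
  have hT_θ : ∀ ζ : V3, ⟪T ζ, eθ⟫ = ⟪ζ, eφ⟫ := fun ζ => by
    conv_lhs => rw [← hTeφ]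
    exact T.inner_map_map ζ eφ
  have hT_φ : ∀ ζ : V3, ⟪T ζ, eφ⟫ = ⟪ζ, eθ⟫ := fun ζ => by
    conv_lhs => rw [← hTeθ]
    exact T.inner_map_map ζ eθ
  -- vanishing odd integrals
  have vθ : ∀ f : ℝ → ℝ → ℝ,
      (∫ ζ : V3, ⟪ζ, eθ⟫ * f ⟪ζ, er⟫ ‖ζ‖ * Egauss ζ) = 0 := by
    intro f
    refine integral_eq_zero_of_neg Rθ _ fun ζ => ?_
    simp only [Egauss, hRθ_θ, hRθ_r, LinearIsometryEquiv.norm_map]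
    ring
  have vφ : ∀ f : ℝ → ℝ → ℝ,
      (∫ ζ : V3, ⟪ζ, eφ⟫ * f ⟪ζ, er⟫ ‖ζ‖ * Egauss ζ) = 0 := by
    intro f
    refine integral_eq_zero_of_neg Rφ _ fun ζ => ?_
    simp only [Egauss, hRφ_φ, hRφ_r, LinearIsometryEquiv.norm_map]
    ring
  have vθr : ∀ f : ℝ → ℝ → ℝ,
      (∫ ζ : V3, ⟪ζ, eθ⟫ * ⟪ζ, er⟫ * f ⟪ζ, er⟫ ‖ζ‖ * Egauss ζ) = 0 := by
    intro f
    refine integral_eq_zero_of_neg Rθ _ fun ζ => ?_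
    simp only [Egauss, hRθ_θ, hRθ_r, LinearIsometryEquiv.norm_map]
    ring
  have vφr : ∀ f : ℝ → ℝ → ℝ,
      (∫ ζ : V3, ⟪ζ, eφ⟫ * ⟪ζ, er⟫ * f ⟪ζ, er⟫ ‖ζ‖ * Egauss ζ) = 0 := by
    intro f
    refine integral_eq_zero_of_neg Rφ _ fun ζ => ?_
    simp only [Egauss, hRφ_φ, hRφ_r, LinearIsometryEquiv.norm_map]
    ring
  have vθφ : ∀ f : ℝ → ℝ → ℝ,
      (∫ ζ : V3, ⟪ζ, eθ⟫ * ⟪ζ, eφ⟫ * f ⟪ζ, er⟫ ‖ζ‖ * Egauss ζ) = 0 := by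
    intro f
    refine integral_eq_zero_of_neg Rθ _ fun ζ => ?_
    simp only [Egauss, hRθ_θ, hRθ_φ, hRθ_r, LinearIsometryEquiv.norm_map]
    ring
  -- exchange of eθ and eφ squares
  have heq : ∀ f : ℝ → ℝ → ℝ,
      (∫ ζ : V3, ⟪ζ, eθ⟫ ^ 2 * f ⟪ζ, er⟫ ‖ζ‖ * Egauss ζ)
        = ∫ ζ : V3, ⟪ζ, eφ⟫ ^ 2 * f ⟪ζ, er⟫ ‖ζ‖ * Egauss ζ := by
    intro f
    have h := integral_comp_iso T (fun ζ => ⟪ζ, eφ⟫ ^ 2 * f ⟪ζ, er⟫ ‖ζ‖ * Egauss ζ)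
    rw [← h]
    congr 1
    funext ζ
    simp only [Egauss, hT_φ, hT_r, LinearIsometryEquiv.norm_map]
  -- integrability facts
  have normbd : ∀ u : V3, ‖u‖ = 1 → ∀ ζ : V3, |⟪ζ, u⟫| ≤ ‖ζ‖ := by
    intro u hu ζ
    have h := abs_real_inner_le_norm ζ u
    rwa [hu, mul_one] at h
  have key1 : ∀ u : V3, ‖u‖ = 1 → ∀ f : ℝ → ℝ → ℝ,
      Integrable (fun ζ : V3 => (1 + ‖ζ‖) ^ 2 * f ⟪ζ, er⟫ ‖ζ‖ * Egauss ζ) →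
      Integrable (fun ζ : V3 => ⟪ζ, u⟫ * f ⟪ζ, er⟫ ‖ζ‖ * Egauss ζ) := by
    intro u hu f hf
    refine integrable_weighted hf (continuous_id.inner continuous_const) fun ζ => ?_
    have h := normbd u hu ζ
    nlinarith [norm_nonneg ζ, abs_nonneg (⟪ζ, u⟫)]
  have key2 : ∀ u v : V3, ‖u‖ = 1 → ‖v‖ = 1 → ∀ f : ℝ → ℝ → ℝ,
      Integrable (fun ζ : V3 => (1 + ‖ζ‖) ^ 2 * f ⟪ζ, er⟫ ‖ζ‖ * Egauss ζ) →
      Integrable (fun ζ : V3 => ⟪ζ, u⟫ * ⟪ζ, v⟫ * f ⟪ζ, er⟫ ‖ζ‖ * Egauss ζ) := by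
    intro u v hu hv f hf
    refine integrable_weighted hf
      ((continuous_id.inner continuous_const).mul (continuous_id.inner continuous_const))
      fun ζ => ?_
    rw [abs_mul]
    have h1 := normbd u hu ζ
    have h2 := normbd v hv ζ
    nlinarith [norm_nonneg ζ, abs_nonneg (⟪ζ, u⟫), abs_nonneg (⟪ζ, v⟫)]
  have key2sq : ∀ u : V3, ‖u‖ = 1 → ∀ f : ℝ → ℝ → ℝ,
      Integrable (fun ζ : V3 => (1 + ‖ζ‖) ^ 2 * f ⟪ζ, er⟫ ‖ζ‖ * Egauss ζ) →
      Integrable (fun ζ : V3 => ⟪ζ, u⟫ ^ 2 * f ⟪ζ, er⟫ ‖ζ‖ * Egauss ζ) := by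
    intro u hu f hf
    refine integrable_weighted hf ((continuous_id.inner continuous_const).pow 2) fun ζ => ?_
    have h := normbd u hu ζ
    rw [abs_pow]
    nlinarith [norm_nonneg ζ, abs_nonneg (⟪ζ, u⟫)]
  -- the half identity
  have half : ∀ f : ℝ → ℝ → ℝ,
      Integrable (fun ζ : V3 => (1 + ‖ζ‖) ^ 2 * f ⟪ζ, er⟫ ‖ζ‖ * Egauss ζ) →
      ((∫ ζ : V3, ⟪ζ, eθ⟫ ^ 2 * f ⟪ζ, er⟫ ‖ζ‖ * Egauss ζ)
          = (1 / 2) * ∫ ζ : V3, (‖ζ‖ ^ 2 - ⟪ζ, er⟫ ^ 2) * f ⟪ζ, er⟫ ‖ζ‖ * Egauss ζ) ∧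
      ((∫ ζ : V3, ⟪ζ, eφ⟫ ^ 2 * f ⟪ζ, er⟫ ‖ζ‖ * Egauss ζ)
          = (1 / 2) * ∫ ζ : V3, (‖ζ‖ ^ 2 - ⟪ζ, er⟫ ^ 2) * f ⟪ζ, er⟫ ‖ζ‖ * Egauss ζ) := by
    intro f hf
    have hsum : (∫ ζ : V3, (‖ζ‖ ^ 2 - ⟪ζ, er⟫ ^ 2) * f ⟪ζ, er⟫ ‖ζ‖ * Egauss ζ)
        = (∫ ζ : V3, ⟪ζ, eθ⟫ ^ 2 * f ⟪ζ, er⟫ ‖ζ‖ * Egauss ζ)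
          + ∫ ζ : V3, ⟪ζ, eφ⟫ ^ 2 * f ⟪ζ, er⟫ ‖ζ‖ * Egauss ζ := by
      rw [← integral_add (key2sq eθ hneθ f hf) (key2sq eφ hneφ f hf)]
      congr 1
      funext ζ
      rw [show ‖ζ‖ ^ 2 - ⟪ζ, er⟫ ^ 2 = ⟪ζ, eθ⟫ ^ 2 + ⟪ζ, eφ⟫ ^ 2 from by
        linarith [parseval ζ]]
      ring
    have he := heq f
    constructor <;> linarith
  -- main computation
  clear_value σ T Rθ Rφ b
  refine ⟨?_, ?_, ?_⟩
  · simp only [gint]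
    have expand : (fun ζ : V3 => ⟪ζ, er⟫ * Φ ζ * Egauss ζ)
        = fun ζ : V3 =>
          (U * Real.cos θ + V * Real.sin θ * Real.cos ϕ)
              * (⟪ζ, er⟫ * A ⟪ζ, er⟫ ‖ζ‖ * Egauss ζ)
          + ((U * Real.sin θ - V * Real.cos θ * Real.cos ϕ)
              * (⟪ζ, eθ⟫ * ⟪ζ, er⟫ * Bf ⟪ζ, er⟫ ‖ζ‖ * Egauss ζ)
          + ((V * Real.sin ϕ) * (⟪ζ, eφ⟫ * ⟪ζ, er⟫ * Bf ⟪ζ, er⟫ ‖ζ‖ * Egauss ζ)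
          + (S * Real.sin θ) * (⟪ζ, eφ⟫ * ⟪ζ, er⟫ * C ⟪ζ, er⟫ ‖ζ‖ * Egauss ζ))) := by
      funext ζ
      rw [hΦ ζ]
      ring
    have I1 : Integrable (fun ζ : V3 => (U * Real.cos θ + V * Real.sin θ * Real.cos ϕ)
        * (⟪ζ, er⟫ * A ⟪ζ, er⟫ ‖ζ‖ * Egauss ζ)) := (key1 er hner A hA).const_mul _
    have I2 : Integrable (fun ζ : V3 => (U * Real.sin θ - V * Real.cos θ * Real.cos ϕ)
        * (⟪ζ, eθ⟫ * ⟪ζ, er⟫ * Bf ⟪ζ, er⟫ ‖ζ‖ * Egauss ζ)) :=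
      (key2 eθ er hneθ hner Bf hB).const_mul _
    have I3 : Integrable (fun ζ : V3 => (V * Real.sin ϕ)
        * (⟪ζ, eφ⟫ * ⟪ζ, er⟫ * Bf ⟪ζ, er⟫ ‖ζ‖ * Egauss ζ)) :=
      (key2 eφ er hneφ hner Bf hB).const_mul _
    have I4 : Integrable (fun ζ : V3 => (S * Real.sin θ)
        * (⟪ζ, eφ⟫ * ⟪ζ, er⟫ * C ⟪ζ, er⟫ ‖ζ‖ * Egauss ζ)) :=
      (key2 eφ er hneφ hner C hC).const_mul _
    have I34 : Integrable (fun ζ : V3 => (V * Real.sin ϕ)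
        * (⟪ζ, eφ⟫ * ⟪ζ, er⟫ * Bf ⟪ζ, er⟫ ‖ζ‖ * Egauss ζ)
        + (S * Real.sin θ) * (⟪ζ, eφ⟫ * ⟪ζ, er⟫ * C ⟪ζ, er⟫ ‖ζ‖ * Egauss ζ)) := I3.add I4
    have I234 : Integrable (fun ζ : V3 => (U * Real.sin θ - V * Real.cos θ * Real.cos ϕ)
        * (⟪ζ, eθ⟫ * ⟪ζ, er⟫ * Bf ⟪ζ, er⟫ ‖ζ‖ * Egauss ζ)
        + ((V * Real.sin ϕ) * (⟪ζ, eφ⟫ * ⟪ζ, er⟫ * Bf ⟪ζ, er⟫ ‖ζ‖ * Egauss ζ)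
        + (S * Real.sin θ) * (⟪ζ, eφ⟫ * ⟪ζ, er⟫ * C ⟪ζ, er⟫ ‖ζ‖ * Egauss ζ))) := I2.add I34
    rw [expand, integral_add I1 I234, integral_add I2 I34, integral_add I3 I4,
      integral_const_mul, integral_const_mul, integral_const_mul, integral_const_mul,
      vθr Bf, vφr Bf, vφr C]
    ring
  · simp only [gint]
    have expand : (fun ζ : V3 => ⟪ζ, eθ⟫ * Φ ζ * Egauss ζ)
        = fun ζ : V3 =>
          (U * Real.cos θ + V * Real.sin θ * Real.cos ϕ)
              * (⟪ζ, eθ⟫ * A ⟪ζ, er⟫ ‖ζ‖ * Egauss ζ)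
          + ((U * Real.sin θ - V * Real.cos θ * Real.cos ϕ)
              * (⟪ζ, eθ⟫ ^ 2 * Bf ⟪ζ, er⟫ ‖ζ‖ * Egauss ζ)
          + ((V * Real.sin ϕ) * (⟪ζ, eθ⟫ * ⟪ζ, eφ⟫ * Bf ⟪ζ, er⟫ ‖ζ‖ * Egauss ζ)
          + (S * Real.sin θ) * (⟪ζ, eθ⟫ * ⟪ζ, eφ⟫ * C ⟪ζ, er⟫ ‖ζ‖ * Egauss ζ))) := by
      funext ζ
      rw [hΦ ζ]
      ring
    have I1 : Integrable (fun ζ : V3 => (U * Real.cos θ + V * Real.sin θ * Real.cos ϕ)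
        * (⟪ζ, eθ⟫ * A ⟪ζ, er⟫ ‖ζ‖ * Egauss ζ)) := (key1 eθ hneθ A hA).const_mul _
    have I2 : Integrable (fun ζ : V3 => (U * Real.sin θ - V * Real.cos θ * Real.cos ϕ)
        * (⟪ζ, eθ⟫ ^ 2 * Bf ⟪ζ, er⟫ ‖ζ‖ * Egauss ζ)) := (key2sq eθ hneθ Bf hB).const_mul _
    have I3 : Integrable (fun ζ : V3 => (V * Real.sin ϕ)
        * (⟪ζ, eθ⟫ * ⟪ζ, eφ⟫ * Bf ⟪ζ, er⟫ ‖ζ‖ * Egauss ζ)) :=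
      (key2 eθ eφ hneθ hneφ Bf hB).const_mul _
    have I4 : Integrable (fun ζ : V3 => (S * Real.sin θ)
        * (⟪ζ, eθ⟫ * ⟪ζ, eφ⟫ * C ⟪ζ, er⟫ ‖ζ‖ * Egauss ζ)) :=
      (key2 eθ eφ hneθ hneφ C hC).const_mul _
    have I34 : Integrable (fun ζ : V3 => (V * Real.sin ϕ)
        * (⟪ζ, eθ⟫ * ⟪ζ, eφ⟫ * Bf ⟪ζ, er⟫ ‖ζ‖ * Egauss ζ)
        + (S * Real.sin θ) * (⟪ζ, eθ⟫ * ⟪ζ, eφ⟫ * C ⟪ζ, er⟫ ‖ζ‖ * Egauss ζ)) := I3.add I4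
    have I234 : Integrable (fun ζ : V3 => (U * Real.sin θ - V * Real.cos θ * Real.cos ϕ)
        * (⟪ζ, eθ⟫ ^ 2 * Bf ⟪ζ, er⟫ ‖ζ‖ * Egauss ζ)
        + ((V * Real.sin ϕ) * (⟪ζ, eθ⟫ * ⟪ζ, eφ⟫ * Bf ⟪ζ, er⟫ ‖ζ‖ * Egauss ζ)
        + (S * Real.sin θ) * (⟪ζ, eθ⟫ * ⟪ζ, eφ⟫ * C ⟪ζ, er⟫ ‖ζ‖ * Egauss ζ))) := I2.add I34
    rw [expand, integral_add I1 I234, integral_add I2 I34, integral_add I3 I4,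
      integral_const_mul, integral_const_mul, integral_const_mul, integral_const_mul,
      vθ A, vθφ Bf, vθφ C, (half Bf hB).1]
    ring
  · simp only [gint]
    have expand : (fun ζ : V3 => ⟪ζ, eφ⟫ * Φ ζ * Egauss ζ)
        = fun ζ : V3 =>
          (U * Real.cos θ + V * Real.sin θ * Real.cos ϕ)
              * (⟪ζ, eφ⟫ * A ⟪ζ, er⟫ ‖ζ‖ * Egauss ζ)
          + ((U * Real.sin θ - V * Real.cos θ * Real.cos ϕ)
              * (⟪ζ, eθ⟫ * ⟪ζ, eφ⟫ * Bf ⟪ζ, er⟫ ‖ζ‖ * Egauss ζ)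
          + ((V * Real.sin ϕ) * (⟪ζ, eφ⟫ ^ 2 * Bf ⟪ζ, er⟫ ‖ζ‖ * Egauss ζ)
          + (S * Real.sin θ) * (⟪ζ, eφ⟫ ^ 2 * C ⟪ζ, er⟫ ‖ζ‖ * Egauss ζ))) := by
      funext ζ
      rw [hΦ ζ]
      ring
    have I1 : Integrable (fun ζ : V3 => (U * Real.cos θ + V * Real.sin θ * Real.cos ϕ)
        * (⟪ζ, eφ⟫ * A ⟪ζ, er⟫ ‖ζ‖ * Egauss ζ)) := (key1 eφ hneφ A hA).const_mul _
    have I2 : Integrable (fun ζ : V3 => (U * Real.sin θ - V * Real.cos θ * Real.cos ϕ)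
        * (⟪ζ, eθ⟫ * ⟪ζ, eφ⟫ * Bf ⟪ζ, er⟫ ‖ζ‖ * Egauss ζ)) :=
      (key2 eθ eφ hneθ hneφ Bf hB).const_mul _
    have I3 : Integrable (fun ζ : V3 => (V * Real.sin ϕ)
        * (⟪ζ, eφ⟫ ^ 2 * Bf ⟪ζ, er⟫ ‖ζ‖ * Egauss ζ)) := (key2sq eφ hneφ Bf hB).const_mul _
    have I4 : Integrable (fun ζ : V3 => (S * Real.sin θ)
        * (⟪ζ, eφ⟫ ^ 2 * C ⟪ζ, er⟫ ‖ζ‖ * Egauss ζ)) := (key2sq eφ hneφ C hC).const_mul _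
    have I34 : Integrable (fun ζ : V3 => (V * Real.sin ϕ)
        * (⟪ζ, eφ⟫ ^ 2 * Bf ⟪ζ, er⟫ ‖ζ‖ * Egauss ζ)
        + (S * Real.sin θ) * (⟪ζ, eφ⟫ ^ 2 * C ⟪ζ, er⟫ ‖ζ‖ * Egauss ζ)) := I3.add I4
    have I234 : Integrable (fun ζ : V3 => (U * Real.sin θ - V * Real.cos θ * Real.cos ϕ)
        * (⟪ζ, eθ⟫ * ⟪ζ, eφ⟫ * Bf ⟪ζ, er⟫ ‖ζ‖ * Egauss ζ)
        + ((V * Real.sin ϕ) * (⟪ζ, eφ⟫ ^ 2 * Bf ⟪ζ, er⟫ ‖ζ‖ * Egauss ζ)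
        + (S * Real.sin θ) * (⟪ζ, eφ⟫ ^ 2 * C ⟪ζ, er⟫ ‖ζ‖ * Egauss ζ))) := I2.add I34
    rw [expand, integral_add I1 I234, integral_add I2 I34, integral_add I3 I4,
      integral_const_mul, integral_const_mul, integral_const_mul, integral_const_mul,
      vφ A, vθφ Bf, (half Bf hB).2, (half C hC).2]
    ring
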